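/- Let γ : [0,1] → ℝ^n be an injective Lipschitz path with constant speed (|γ'| equal to a constant almost everywhere). Then for every Lebesgue-measurable set A ⊂ [0,1], H^1(γ(A)) = Lip(γ) · L(A). -/

import Mathlib

open MeasureTheory Set Filter Topology
open scoped ENNReal NNReal

noncomputable section

/-- Euclidean space `ℝ^n`. -/
abbrev Euc (n : ℕ) : Type := EuclideanSpace ℝ (Fin n)

/-- The hypercube `[-1,1]^n`. -/
def cube (n : ℕ) : Set (Euc n) := {x | ∀ i, |x i| ≤ 1}

lemma edist_le_hausdorff {n : ℕ} (γ : ℝ → Euc n) (hcont : Continuous γ)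
    {a b : ℝ} (hab : a ≤ b) :
    edist (γ a) (γ b) ≤ μH[1] (γ '' Icc a b) := by
  set f : Euc n → ℝ := fun x => ‖x - γ a‖ with hfdef
  have hlip : LipschitzWith 1 f := LipschitzWith.of_dist_le_mul fun x y => by
    rw [Real.dist_eq, NNReal.coe_one, one_mul, dist_eq_norm]
    have : (x - γ a) - (y - γ a) = x - y := by abel
    simpa [hfdef, this] using abs_norm_sub_norm_le (x - γ a) (y - γ a)
  have h1 : μH[1] ((f ∘ γ) '' Icc a b) ≤ μH[1] (γ '' Icc a b) := by
    rw [Set.image_comp]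
    simpa using hlip.hausdorffMeasure_image_le (d := 1) zero_le_one (γ '' Icc a b)
  have h2 : Icc (0:ℝ) ‖γ b - γ a‖ ⊆ (f ∘ γ) '' Icc a b := by
    have hc : ContinuousOn (f ∘ γ) (Icc a b) :=
      (hlip.continuous.comp hcont).continuousOn
    have := intermediate_value_Icc hab hc
    simpa [hfdef, Function.comp] using this
  calc edist (γ a) (γ b) = volume (Icc (0:ℝ) ‖γ b - γ a‖) := by
        rw [Real.volume_Icc, edist_dist, dist_eq_norm, norm_sub_rev]
        simp
    _ ≤ μH[1] ((f ∘ γ) '' Icc a b) := by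
        rw [← MeasureTheory.hausdorffMeasure_real]; exact measure_mono h2
    _ ≤ _ := h1

lemma sum_edist_le_hausdorff {n : ℕ} (γ : ℝ → Euc n) (hcont : Continuous γ)
    (hinj : InjOn γ (Icc (0:ℝ) 1)) (m : ℕ) (p : ℕ → ℝ) (hmono : Monotone p)
    (h0 : 0 ≤ p 0) (hm : p m ≤ 1) :
    ∑ j ∈ Finset.range m, edist (γ (p j)) (γ (p (j+1))) ≤ μH[1] (γ '' Icc 0 1) := by
  haveI : NoAtoms (μH[1] : Measure (Euc n)) := MeasureTheory.Measure.noAtoms_hausdorff _ one_pos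
  have hsub : ∀ j < m, Icc (p j) (p (j+1)) ⊆ Icc (0:ℝ) 1 := by
    intro j hj x hx
    exact ⟨h0.trans ((hmono (Nat.zero_le j)).trans hx.1),
      hx.2.trans ((hmono (by omega : j + 1 ≤ m)).trans hm)⟩
  set S : ℕ → Set (Euc n) := fun j => γ '' Icc (p j) (p (j+1)) with hS
  have hmeas : ∀ j ∈ Finset.range m, NullMeasurableSet (S j) μH[1] := fun j _ =>
    ((isCompact_Icc.image hcont).isClosed.measurableSet).nullMeasurableSet
  have hdisj : Set.Pairwise ↑(Finset.range m) (Function.onFun (AEDisjoint μH[1]) S) := by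
    intro i hi j hj hij
    simp only [Finset.coe_range, mem_Iio] at hi hj
    wlog hlt : i < j generalizing i j
    · exact AEDisjoint.symm (this (Ne.symm hij) hj hi (by omega))
    have hint : S i ∩ S j ⊆ γ '' {p j} := by
      rw [hS]
      rw [← hinj.image_inter (hsub i hi) (hsub j hj)]
      apply image_mono
      intro x hx
      have h1 : x ≤ p (i+1) := hx.1.2
      have h2 : p j ≤ x := hx.2.1
      have : p (i+1) ≤ p j := hmono (by omega)
      simp [le_antisymm (h1.trans this) h2]
    refine measure_mono_null hint ?_
    simp
    exact (MeasureTheory.Measure.noAtoms_hausdorff _ one_pos).measure_singleton _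
  calc ∑ j ∈ Finset.range m, edist (γ (p j)) (γ (p (j+1)))
      ≤ ∑ j ∈ Finset.range m, μH[1] (S j) := by
        apply Finset.sum_le_sum
        intro j hj
        exact edist_le_hausdorff γ hcont (hmono (by omega))
    _ = μH[1] (⋃ j ∈ Finset.range m, S j) := (measure_biUnion_finset₀ hdisj hmeas).symm
    _ ≤ μH[1] (γ '' Icc 0 1) := by
        apply measure_mono
        refine iUnion₂_subset fun j hj => image_mono (hsub j (by simpa using hj))

lemma integral_diff_le {n : ℕ} (γ : ℝ → Euc n) (hcont : Continuous γ)
    (hinj : InjOn γ (Icc (0:ℝ) 1)) {Hr : ℝ} (hHr : 0 ≤ Hr)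
    (hH : μH[1] (γ '' Icc 0 1) ≤ ENNReal.ofReal Hr)
    (N : ℕ) (hN : 1 ≤ N) :
    ∫ t in (0:ℝ)..(1 - 1/N), ‖γ (t + 1/N) - γ t‖ ≤ (1/N) * Hr := by
  set g : ℝ → ℝ := fun t => ‖γ (t + 1/N) - γ t‖ with hg
  have hgc : Continuous g := by
    apply Continuous.norm
    exact (hcont.comp (continuous_id.add continuous_const)).sub hcont
  have hNpos : (0:ℝ) < N := by exact_mod_cast hN
  have hNR : (0:ℝ) < 1/N := by positivity
  have hcast : ((N - 1 : ℕ) : ℝ) = (N : ℝ) - 1 := by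
    rw [Nat.cast_sub hN]; simp
  have hend : ((N - 1 : ℕ) : ℝ) / N = 1 - 1/N := by
    rw [hcast]; field_simp
  set a : ℕ → ℝ := fun k => k / N with ha
  have hsum : ∑ k ∈ Finset.range (N-1), ∫ x in a k..a (k+1), g x
      = ∫ x in (a 0)..(a (N-1)), g x :=
    intervalIntegral.sum_integral_adjacent_intervals fun k _ => hgc.intervalIntegrable _ _
  have ha0 : a 0 = 0 := by simp [ha]
  have haN : a (N-1) = 1 - 1/N := by rw [ha]; exact hend
  have hpiece : ∀ k : ℕ, ∫ x in a k..a (k+1), g x = ∫ s in (0:ℝ)..(1/N), g (s + a k) := by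
    intro k
    rw [intervalIntegral.integral_comp_add_right g (a k)]
    congr 1
    · simp
    · rw [ha]; push_cast; ring
  have hswap : ∑ k ∈ Finset.range (N-1), ∫ s in (0:ℝ)..(1/N), g (s + a k)
      = ∫ s in (0:ℝ)..(1/N), ∑ k ∈ Finset.range (N-1), g (s + a k) := by
    rw [intervalIntegral.integral_finset_sum]
    intro k _
    exact (hgc.comp (continuous_id.add continuous_const)).intervalIntegrable _ _
  have hptwise : ∀ s ∈ Icc (0:ℝ) (1/N), ∑ k ∈ Finset.range (N-1), g (s + a k) ≤ Hr := by
    intro s hs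
    set p : ℕ → ℝ := fun j => s + j / N with hp
    have hmono : Monotone p := by
      intro i j hij
      simp only [hp]
      have hij' : (i:ℝ) ≤ (j:ℝ) := by exact_mod_cast hij
      have : (i:ℝ) / N ≤ (j:ℝ) / N := by gcongr
      linarith
    have h0 : 0 ≤ p 0 := by simp [hp]; exact hs.1
    have hm : p (N-1) ≤ 1 := by
      simp only [hp, hcast]
      have := hs.2
      have h1 : ((N:ℝ) - 1)/N = 1 - 1/N := by field_simp
      rw [h1]; linarith
    have key := sum_edist_le_hausdorff γ hcont hinj (N-1) p hmono h0 hm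
    have hsum_eq : ∑ j ∈ Finset.range (N-1), edist (γ (p j)) (γ (p (j+1)))
        = ENNReal.ofReal (∑ k ∈ Finset.range (N-1), g (s + a k)) := by
      rw [ENNReal.ofReal_sum_of_nonneg (fun k _ => norm_nonneg _)]
      apply Finset.sum_congr rfl
      intro k _
      have e1 : p (k+1) = s + a k + 1/N := by simp only [hp, ha]; push_cast; ring
      have e2 : p k = s + a k := by simp only [hp, ha]
      rw [edist_dist, dist_eq_norm, norm_sub_rev, e1, e2]
    rw [hsum_eq] at key
    exact (ENNReal.ofReal_le_ofReal_iff hHr).mp (key.trans hH)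
  calc ∫ t in (0:ℝ)..(1 - 1/N), g t = ∫ x in (a 0)..(a (N-1)), g x := by rw [ha0, haN]
    _ = ∑ k ∈ Finset.range (N-1), ∫ x in a k..a (k+1), g x := hsum.symm
    _ = ∑ k ∈ Finset.range (N-1), ∫ s in (0:ℝ)..(1/N), g (s + a k) := by
        exact Finset.sum_congr rfl fun k _ => hpiece k
    _ = ∫ s in (0:ℝ)..(1/N), ∑ k ∈ Finset.range (N-1), g (s + a k) := hswap
    _ ≤ ∫ s in (0:ℝ)..(1/N), Hr := by
        apply intervalIntegral.integral_mono_on hNR.le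
        · apply Continuous.intervalIntegrable
          exact continuous_finset_sum _ fun k _ => hgc.comp (continuous_id.add continuous_const)
        · exact intervalIntegrable_const
        · exact hptwise
    _ = (1/N) * Hr := by simp

lemma lower_bound {n : ℕ} (γ : ℝ → Euc n) (K : ℝ≥0)
    (hγ : LipschitzWith K γ) (hinj : InjOn γ (Icc (0:ℝ) 1)) (hK : 0 < (K:ℝ))
    (hspeed : ∀ᵐ t ∂(volume.restrict (Icc (0:ℝ) 1)), ‖deriv γ t‖ = (K : ℝ)) :
    (K : ℝ≥0∞) ≤ μH[1] (γ '' Icc 0 1) := by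
  have hcont : Continuous γ := hγ.continuous
  have hfin : μH[1] (γ '' Icc (0:ℝ) 1) < ⊤ := by
    calc μH[1] (γ '' Icc (0:ℝ) 1) ≤ (K:ℝ≥0∞)^(1:ℝ) * μH[1] (Icc (0:ℝ) 1) :=
          hγ.hausdorffMeasure_image_le (d := 1) zero_le_one _
      _ = (K:ℝ≥0∞) * volume (Icc (0:ℝ) 1) := by
          rw [MeasureTheory.hausdorffMeasure_real, ENNReal.rpow_one]
      _ < ⊤ := by simp [Real.volume_Icc]
  set Hr : ℝ := (μH[1] (γ '' Icc (0:ℝ) 1)).toReal with hHrdef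
  have hHr0 : 0 ≤ Hr := ENNReal.toReal_nonneg
  have hHofReal : μH[1] (γ '' Icc (0:ℝ) 1) ≤ ENNReal.ofReal Hr := by
    rw [hHrdef, ENNReal.ofReal_toReal hfin.ne]
  set F : ℕ → ℝ → ℝ := fun N t =>
    (Ioc (0:ℝ) (1 - 1/N)).indicator (fun t => (N:ℝ) * ‖γ (t + 1/N) - γ t‖) t with hF
  set Glim : ℝ → ℝ := (Ioo (0:ℝ) 1).indicator (fun _ => (K:ℝ)) with hG
  set bound : ℝ → ℝ := (Ioc (0:ℝ) 1).indicator (fun _ => (K:ℝ)) with hb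
  have hmeasF : ∀ N : ℕ, AEStronglyMeasurable (F N) volume := by
    intro N
    apply AEStronglyMeasurable.indicator _ measurableSet_Ioc
    apply Continuous.aestronglyMeasurable
    exact continuous_const.mul
      (((hcont.comp (continuous_id.add continuous_const)).sub hcont).norm)
  have hbound_int : Integrable bound := by
    rw [hb, integrable_indicator_iff measurableSet_Ioc]
    apply (integrableOn_const_iff).mpr
    right; simp [Real.volume_Ioc]
  have hbound : ∀ N : ℕ, ∀ᵐ t ∂volume, ‖F N t‖ ≤ bound t := by
    intro N
    refine Eventually.of_forall fun t => ?_
    by_cases hmem : t ∈ Ioc (0:ℝ) (1 - 1/N)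
    · rcases Nat.eq_zero_or_pos N with hN0 | hN1
      · have hz : F N t = 0 := by simp [hF, hN0]
        rw [hz, norm_zero, hb]
        exact indicator_nonneg (fun x _ => hK.le) t
      · have hNpos : (0:ℝ) < N := by exact_mod_cast hN1
        have h1N : (0:ℝ) < 1/N := by positivity
        have ht1 : t ∈ Ioc (0:ℝ) 1 := ⟨hmem.1, hmem.2.trans (by linarith)⟩
        rw [hF, hb]
        simp only [indicator_of_mem hmem, indicator_of_mem ht1]
        rw [Real.norm_eq_abs, abs_of_nonneg (by positivity)]
        have hlipest : ‖γ (t + 1/N) - γ t‖ ≤ (K:ℝ) * (1/N) := by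
          have := hγ.dist_le_mul (t + 1/N) t
          rw [dist_eq_norm] at this
          simpa [Real.dist_eq, abs_of_pos h1N] using this
        calc (N:ℝ) * ‖γ (t + 1/N) - γ t‖ ≤ (N:ℝ) * ((K:ℝ) * (1/N)) := by
              exact mul_le_mul_of_nonneg_left hlipest hNpos.le
          _ = (K:ℝ) := by field_simp
    · simp only [hF, indicator_of_notMem hmem, norm_zero]
      rw [hb]
      exact indicator_nonneg (fun x _ => hK.le) t
  have hae : ∀ᵐ t ∂(volume : Measure ℝ), t ∈ Icc (0:ℝ) 1 → ‖deriv γ t‖ = (K:ℝ) :=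
    (ae_restrict_iff' measurableSet_Icc).mp hspeed
  have hconv : ∀ᵐ t ∂(volume : Measure ℝ), Tendsto (fun N => F N t) atTop (𝓝 (Glim t)) := by
    filter_upwards [hae] with t ht
    by_cases h01 : t ∈ Ioo (0:ℝ) 1
    · have hK' : ‖deriv γ t‖ = (K:ℝ) := ht (Ioo_subset_Icc_self h01)
      have hdiff : DifferentiableAt ℝ γ t := by
        by_contra h
        rw [deriv_zero_of_not_differentiableAt h] at hK'
        simp at hK'
        linarith
      have hd : HasDerivAt γ (deriv γ t) t := hdiff.hasDerivAt
      have hslope := hasDerivAt_iff_tendsto_slope.mp hd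
      have hu : Tendsto (fun N : ℕ => t + 1/(N:ℝ)) atTop (𝓝[≠] t) := by
        rw [tendsto_nhdsWithin_iff]
        constructor
        · have h0 := tendsto_one_div_atTop_nhds_zero_nat.const_add t
          simpa using h0
        · filter_upwards [eventually_ge_atTop 1] with N hN
          have : (0:ℝ) < 1/(N:ℝ) := by
            have : (0:ℝ) < N := by exact_mod_cast hN
            positivity
          simp only [mem_compl_iff, mem_singleton_iff]
          intro h
          nlinarith [congrArg (fun x => x - t) h]
      have h2 : Tendsto (fun N : ℕ => ‖slope γ t (t + 1/(N:ℝ))‖) atTop (𝓝 ‖deriv γ t‖) :=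
        (continuous_norm.tendsto _).comp (hslope.comp hu)
      rw [hK'] at h2
      have hGt : Glim t = (K:ℝ) := by rw [hG]; exact indicator_of_mem h01 _
      rw [hGt]
      apply h2.congr'
      have hlt : ∀ᶠ N : ℕ in atTop, 1/(N:ℝ) < 1 - t :=
        tendsto_one_div_atTop_nhds_zero_nat.eventually_lt_const (by linarith [h01.2])
      filter_upwards [hlt, eventually_ge_atTop 1] with N h1 hN1
      have hNpos : (0:ℝ) < N := by exact_mod_cast hN1
      have hmem : t ∈ Ioc (0:ℝ) (1 - 1/N) := ⟨h01.1, by linarith⟩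
      rw [hF]
      simp only [indicator_of_mem hmem]
      rw [slope_def_module, add_sub_cancel_left, norm_smul, Real.norm_eq_abs,
        abs_of_pos (by positivity : (0:ℝ) < (1/(N:ℝ))⁻¹), one_div, inv_inv]
    · have hzero : ∀ N : ℕ, F N t = 0 := by
        intro N
        by_cases hmem : t ∈ Ioc (0:ℝ) (1 - 1/N)
        · have hN0 : N = 0 := by
            by_contra hN
            have hNpos : (0:ℝ) < N := by
              have := Nat.pos_of_ne_zero hN; exact_mod_cast this
            have h1N : (0:ℝ) < 1/N := by positivity
            rcases not_and_or.mp h01 with h | h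
            · exact h hmem.1
            · push_neg at h
              have := hmem.2
              linarith
          rw [hF]
          simp [indicator_of_mem hmem, hN0]
        · rw [hF]; exact indicator_of_notMem hmem _
      have hGt : Glim t = 0 := by rw [hG]; exact indicator_of_notMem h01 _
      rw [hGt]
      simp only [hzero]
      exact tendsto_const_nhds
  have htend : Tendsto (fun N => ∫ t, F N t) atTop (𝓝 (∫ t, Glim t)) :=
    MeasureTheory.tendsto_integral_of_dominated_convergence bound hmeasF hbound_int hbound hconv
  have hGint : ∫ t, Glim t = (K:ℝ) := by
    rw [hG, MeasureTheory.integral_indicator_const _ measurableSet_Ioo]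
    simp [Real.volume_Ioo]
  have hle : ∀ᶠ N : ℕ in atTop, ∫ t, F N t ≤ Hr := by
    filter_upwards [eventually_ge_atTop 1] with N hN1
    have hNpos : (0:ℝ) < N := by exact_mod_cast hN1
    have h1N : (0:ℝ) < 1/N := by positivity
    have hend : (0:ℝ) ≤ 1 - 1/N := by
      have : 1/(N:ℝ) ≤ 1 := by
        rw [div_le_one hNpos]; exact_mod_cast hN1
      linarith
    have key := integral_diff_le γ hcont hinj hHr0 hHofReal N hN1
    have : ∫ t, F N t = (N:ℝ) * ∫ t in (0:ℝ)..(1 - 1/N), ‖γ (t + 1/N) - γ t‖ := by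
      rw [hF, MeasureTheory.integral_indicator measurableSet_Ioc,
        intervalIntegral.integral_of_le hend, MeasureTheory.integral_const_mul]
    rw [this]
    calc (N:ℝ) * ∫ t in (0:ℝ)..(1 - 1/N), ‖γ (t + 1/N) - γ t‖
        ≤ (N:ℝ) * ((1/N) * Hr) := mul_le_mul_of_nonneg_left key hNpos.le
      _ = Hr := by field_simp
  have hKle : (K:ℝ) ≤ Hr := by
    rw [← hGint]
    exact le_of_tendsto htend hle
  calc (K : ℝ≥0∞) = ENNReal.ofReal (K:ℝ) := by simp
    _ ≤ ENNReal.ofReal Hr := ENNReal.ofReal_le_ofReal hKle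
    _ = μH[1] (γ '' Icc 0 1) := by rw [hHrdef, ENNReal.ofReal_toReal hfin.ne]

/-- For an injective constant-speed Lipschitz path `γ` with speed (and Lipschitz constant) `K`,
`H^1(γ(A)) = Lip(γ) · L(A)` for every measurable `A ⊆ [0,1]`. -/
theorem hausdorff_image_eq_of_injOn_constant_speed {n : ℕ} (γ : ℝ → Euc n) (K : ℝ≥0)
    (hγ : LipschitzWith K γ) (hinj : InjOn γ (Icc (0:ℝ) 1))
    (hspeed : ∀ᵐ t ∂(volume.restrict (Icc (0:ℝ) 1)), ‖deriv γ t‖ = (K : ℝ))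
    (A : Set ℝ) (hA : MeasurableSet A) (hA1 : A ⊆ Icc (0:ℝ) 1) :
    μH[1] (γ '' A) = (K : ℝ≥0∞) * volume A := by
  have hK : 0 < (K:ℝ) := by
    by_contra h
    push_neg at h
    have hK0 : (K:ℝ) = 0 := le_antisymm h K.coe_nonneg
    have heq : γ 0 = γ 1 := by
      have := hγ.dist_le_mul 0 1
      rw [hK0, zero_mul] at this
      exact dist_le_zero.mp this
    have h01 : (0:ℝ) = 1 := hinj (by simp) (by simp) heq
    norm_num at h01
  have hub : ∀ S : Set ℝ, μH[1] (γ '' S) ≤ (K:ℝ≥0∞) * volume S := fun S => by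
    calc μH[1] (γ '' S) ≤ (K:ℝ≥0∞)^(1:ℝ) * μH[1] S :=
          hγ.hausdorffMeasure_image_le (d := 1) zero_le_one S
      _ = (K:ℝ≥0∞) * volume S := by
          rw [MeasureTheory.hausdorffMeasure_real, ENNReal.rpow_one]
  have hlb : (K:ℝ≥0∞) ≤ μH[1] (γ '' Icc 0 1) := lower_bound γ K hγ hinj hK hspeed
  set B := Icc (0:ℝ) 1 \ A with hBdef
  have hABu : A ∪ B = Icc (0:ℝ) 1 := union_diff_cancel hA1
  have hvA1 : volume A ≤ 1 := by
    calc volume A ≤ volume (Icc (0:ℝ) 1) := measure_mono hA1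
      _ = 1 := by simp [Real.volume_Icc]
  have hvB1 : volume B ≤ 1 := by
    calc volume B ≤ volume (Icc (0:ℝ) 1) := measure_mono (diff_subset)
      _ = 1 := by simp [Real.volume_Icc]
  have hvol : volume A + volume B = 1 := by
    rw [hBdef, measure_diff hA1 hA.nullMeasurableSet (hvA1.trans_lt ENNReal.one_lt_top).ne]
    rw [Real.volume_Icc]
    simp only [sub_zero, ENNReal.ofReal_one]
    exact add_tsub_cancel_of_le hvA1
  have h1 : (K:ℝ≥0∞) * volume A + (K:ℝ≥0∞) * volume B
      ≤ μH[1] (γ '' A) + μH[1] (γ '' B) := by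
    calc (K:ℝ≥0∞) * volume A + (K:ℝ≥0∞) * volume B
        = (K:ℝ≥0∞) * (volume A + volume B) := (mul_add _ _ _).symm
      _ = (K:ℝ≥0∞) := by rw [hvol, mul_one]
      _ ≤ μH[1] (γ '' Icc 0 1) := hlb
      _ = μH[1] (γ '' A ∪ γ '' B) := by rw [← image_union, hABu]
      _ ≤ μH[1] (γ '' A) + μH[1] (γ '' B) := measure_union_le _ _
  have hKB : (K:ℝ≥0∞) * volume B ≠ ⊤ :=
    (ENNReal.mul_lt_top ENNReal.coe_lt_top (hvB1.trans_lt ENNReal.one_lt_top)).ne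
  have hgeA : (K:ℝ≥0∞) * volume A ≤ μH[1] (γ '' A) := by
    have h2 : (K:ℝ≥0∞) * volume A + (K:ℝ≥0∞) * volume B
        ≤ μH[1] (γ '' A) + (K:ℝ≥0∞) * volume B := h1.trans (add_le_add le_rfl (hub B))
    exact (ENNReal.add_le_add_iff_right hKB).mp h2
  exact le_antisymm (hub A) hgeA
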